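/- Let K be a number field with [K:ℚ] = 4 that is totally imaginary (i.e., no field embedding K → ℂ has image contained in ℝ). Let τ₁, τ₂ : K → ℂ be field embeddings such that τ₂ ≠ τ₁ and τ₂ is not the complex conjugate of τ₁. Let R > 0 and let z₁, z₂ be algebraic integers of K with z₁ ≠ z₂, |τ₂(z₁)| ≤ R, and |τ₂(z₂)| ≤ R. Then |τ₁(z₁) − τ₁(z₂)| ≥ 1/(2R). -/

import Mathlib

open NumberField

/-- Let `K` be a totally imaginary quartic number field, `τ₁ τ₂ : K → ℂ` embeddings with
`τ₂ ≠ τ₁` and `τ₂` not the complex conjugate of `τ₁`. If `z₁ ≠ z₂` are algebraic integers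
of `K` with `|τ₂ z₁| ≤ R` and `|τ₂ z₂| ≤ R` for some `R > 0`, then
`|τ₁ z₁ - τ₁ z₂| ≥ 1 / (2 * R)`. -/
theorem stmt_0 (K : Type*) [Field K] [NumberField K]
    (hdeg : Module.finrank ℚ K = 4)
    (hTI : ∀ τ : K →+* ℂ, ¬ Set.range τ ⊆ Set.range (Complex.ofReal : ℝ → ℂ))
    (τ₁ τ₂ : K →+* ℂ) (hne : τ₂ ≠ τ₁)
    (hconj : τ₂ ≠ (starRingEnd ℂ).comp τ₁)
    (R : ℝ) (hR : 0 < R)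
    (z₁ z₂ : 𝓞 K) (hz : z₁ ≠ z₂)
    (h₁ : ‖τ₂ (z₁ : K)‖ ≤ R) (h₂ : ‖τ₂ (z₂ : K)‖ ≤ R) :
    1 / (2 * R) ≤ ‖τ₁ (z₁ : K) - τ₁ (z₂ : K)‖ := by
  classical
  set z : 𝓞 K := z₁ - z₂ with hzdef
  have hz0 : z ≠ 0 := sub_ne_zero.mpr hz
  set x : K := (z : K) with hxdef
  have hx1 : τ₁ (z₁ : K) - τ₁ (z₂ : K) = τ₁ x := by
    simp [hxdef, hzdef, map_sub]
  have hx2 : ‖τ₂ x‖ ≤ 2 * R := by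
    have : τ₂ x = τ₂ (z₁ : K) - τ₂ (z₂ : K) := by simp [hxdef, hzdef, map_sub]
    rw [this]
    calc ‖τ₂ (z₁ : K) - τ₂ (z₂ : K)‖
        ≤ ‖τ₂ (z₁ : K)‖ + ‖τ₂ (z₂ : K)‖ := norm_sub_le _ _
      _ ≤ 2 * R := by linarith
  -- conjugation helpers
  have hcc : ∀ φ : K →+* ℂ, (starRingEnd ℂ).comp ((starRingEnd ℂ).comp φ) = φ := fun φ =>
    RingHom.ext fun k => Complex.conj_conj _
  have hτ : ∀ φ : K →+* ℂ, (starRingEnd ℂ).comp φ ≠ φ := by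
    intro φ h
    refine hTI φ ?_
    rintro _ ⟨k, rfl⟩
    exact ⟨(φ k).re, Complex.conj_eq_iff_re.mp (RingHom.congr_fun h k)⟩
  set σ₁ : K →+* ℂ := (starRingEnd ℂ).comp τ₁ with hσ₁
  set σ₂ : K →+* ℂ := (starRingEnd ℂ).comp τ₂ with hσ₂
  have d1 : τ₁ ≠ σ₁ := fun h => hτ τ₁ h.symm
  have d2 : τ₁ ≠ τ₂ := hne.symm
  have d3 : τ₁ ≠ σ₂ := by
    intro h
    apply hconj
    rw [← hcc τ₂, ← hσ₂, ← h]
  have d4 : σ₁ ≠ τ₂ := fun h => hconj h.symm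
  have d5 : σ₁ ≠ σ₂ := by
    intro h
    apply d2
    rw [← hcc τ₁, ← hσ₁, h, hσ₂, hcc]
  have d6 : τ₂ ≠ σ₂ := fun h => hτ τ₂ h.symm
  -- the four embeddings exhaust all embeddings
  have hcard : Fintype.card (K →+* ℂ) = 4 := by
    rw [NumberField.Embeddings.card K ℂ, hdeg]
  have huniv : (Finset.univ : Finset (K →+* ℂ)) = {τ₁, σ₁, τ₂, σ₂} := by
    refine (Finset.eq_of_subset_of_card_le (Finset.subset_univ _) ?_).symm
    rw [Finset.card_univ, hcard]
    rw [Finset.card_insert_of_notMem (by simp [d1, d2, d3]),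
      Finset.card_insert_of_notMem (by simp [d4, d5]),
      Finset.card_insert_of_notMem (by simp [d6]), Finset.card_singleton]
  -- product of absolute values equals |norm|
  have hprod : ∏ φ : K →+* ℂ, ‖φ x‖ = |Algebra.norm ℚ x| := by
    have h := congrArg (fun w : ℂ => ‖w‖) (Algebra.norm_eq_prod_embeddings ℚ ℂ x)
    rw [norm_prod] at h
    rw [Fintype.prod_equiv (RingHom.equivRatAlgHom K ℂ) (fun φ => ‖φ x‖)
      (fun ψ : K →ₐ[ℚ] ℂ => ‖ψ x‖)
      (fun φ => by simp [RingHom.equivRatAlgHom_apply])]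
    rw [← h, eq_ratCast, Complex.norm_ratCast, Rat.cast_abs]
  have hnorm : (1 : ℚ) ≤ |Algebra.norm ℚ x| := by
    have h := Int.one_le_abs (Algebra.norm_ne_zero_iff.mpr hz0)
    rw [hxdef, ← Algebra.coe_norm_int]
    exact_mod_cast h
  have hprod' : ∏ φ : K →+* ℂ, ‖φ x‖
      = ‖τ₁ x‖ * (‖τ₁ x‖ * (‖τ₂ x‖ * ‖τ₂ x‖)) := by
    rw [huniv, Finset.prod_insert (by simp [d1, d2, d3]),
      Finset.prod_insert (by simp [d4, d5]), Finset.prod_insert (by simp [d6]),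
      Finset.prod_singleton]
    simp [hσ₁, hσ₂, Complex.norm_conj, RingHom.comp_apply]
  have key : (1 : ℝ) ≤ ‖τ₁ x‖ * (‖τ₁ x‖
      * (‖τ₂ x‖ * ‖τ₂ x‖)) := by
    rw [← hprod', hprod]
    exact_mod_cast hnorm
  rw [hx1]
  have hA : 0 ≤ ‖τ₁ x‖ := norm_nonneg _
  have hB : 0 ≤ ‖τ₂ x‖ := norm_nonneg _
  rw [div_le_iff₀ (by positivity)]
  have hB2 : ‖τ₂ x‖ * ‖τ₂ x‖ ≤ (2 * R) * (2 * R) :=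
    mul_le_mul hx2 hx2 hB (by linarith)
  have hA2 : ‖τ₁ x‖ * ‖τ₁ x‖ * (‖τ₂ x‖ * ‖τ₂ x‖)
      ≤ ‖τ₁ x‖ * ‖τ₁ x‖ * ((2 * R) * (2 * R)) :=
    mul_le_mul_of_nonneg_left hB2 (mul_nonneg hA hA)
  nlinarith [mul_nonneg hA (le_of_lt (by linarith : (0:ℝ) < 2 * R))]
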